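/- arXiv:0708.4040 — 5 statements merged into one kernel-verified Lean document; each statement's English description precedes it below -/
import Mathlib

section
/- Let A be an n×m integer matrix all of whose entries are at most E ≥ 1 in absolute value, and let v ∈ ℝ^m satisfy ‖Av‖ ≤ δ. Then there exists v₀ ∈ ker(A) with ‖v − v₀‖ ≤ δ·(nm)^{n/2}·E^n. -/
open Submodule Matrix

lemma extract_basis {ι V : Type*} [Fintype ι] [AddCommGroup V] [Module ℝ V] (R : ι → V) :
    ∃ (r : ℕ) (e : Fin r → ι), Function.Injective e ∧ LinearIndependent ℝ (R ∘ e) ∧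
      ∀ i, R i ∈ Submodule.span ℝ (Set.range (R ∘ e)) := by
  classical
  obtain ⟨b, hbs, hspan, hindep⟩ := exists_linearIndependent ℝ (Set.range R)
  have hfin : b.Finite := (Set.finite_range R).subset hbs
  haveI := hfin.fintype
  set r := Fintype.card b with hr
  let φ : Fin r → b := (Fintype.equivFin b).symm
  have hρ : ∀ y : b, ∃ i, R i = (y : V) := fun y => hbs y.2
  choose ρ hρ' using hρ
  have hkey : R ∘ (fun k => ρ (φ k)) = fun k => ((φ k : V)) := funext fun k => hρ' (φ k)
  have hrange : Set.range (R ∘ (fun k => ρ (φ k))) = b := by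
    rw [hkey]
    have : (fun k => ((φ k : V))) = Subtype.val ∘ φ := rfl
    rw [this, Set.range_comp, Equiv.range_eq_univ, Set.image_univ, Subtype.range_coe]
  refine ⟨r, fun k => ρ (φ k), ?_, ?_, ?_⟩
  · intro k k' h
    have h2 : (φ k : V) = (φ k' : V) := by
      rw [← hρ' (φ k), ← hρ' (φ k')]; exact congrArg R h
    exact (Equiv.injective _) (Subtype.ext h2)
  · rw [hkey]
    exact hindep.comp φ (Equiv.injective _)
  · intro i
    rw [hrange, hspan]
    exact subset_span ⟨i, rfl⟩

lemma fact_le_pow_pred : ∀ r : ℕ, r.factorial ≤ r ^ (r - 1)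
  | 0 => le_refl 1
  | 1 => le_refl 1
  | (r + 2) => by
    calc (r+2).factorial = (r+2) * (r+1).factorial := rfl
    _ ≤ (r+2) * (r+1) ^ (r+1-1) := Nat.mul_le_mul_left _ (fact_le_pow_pred (r+1))
    _ ≤ (r+2) * (r+2) ^ r := by
        exact Nat.mul_le_mul_left _ (Nat.pow_le_pow_left (by omega) _)
    _ = (r+2) ^ (r+1) := by rw [pow_succ]; ring

set_option maxHeartbeats 1000000 in
/-- If `A` is an `n × m` integer matrix with entries bounded by `E ≥ 1`
and `v ∈ ℝ^m` satisfies `‖Av‖ ≤ δ`, then there is `v₀ ∈ ker A` with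
`‖v - v₀‖ ≤ δ · (nm)^{n/2} · E^n`. -/
theorem stmt0 (n m : ℕ) (A : Matrix (Fin n) (Fin m) ℤ) (E : ℤ) (hE : 1 ≤ E)
    (hA : ∀ i j, |A i j| ≤ E) (v : EuclideanSpace ℝ (Fin m)) (δ : ℝ)
    (hv : ‖(EuclideanSpace.equiv (Fin n) ℝ).symm
        ((A.map (Int.cast : ℤ → ℝ)).mulVec (EuclideanSpace.equiv (Fin m) ℝ v))‖ ≤ δ) :
    ∃ v₀ : EuclideanSpace ℝ (Fin m),
      (A.map (Int.cast : ℤ → ℝ)).mulVec (EuclideanSpace.equiv (Fin m) ℝ v₀) = 0 ∧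
      ‖v - v₀‖ ≤ δ * ((n * m : ℝ) ^ ((n : ℝ) / 2)) * (E : ℝ) ^ n := by
  classical
  set W : Matrix (Fin n) (Fin m) ℝ := A.map (Int.cast : ℤ → ℝ) with hWdef
  obtain ⟨r, e, he, hind, hsp⟩ := extract_basis (fun i => W i)
  set M : Matrix (Fin r) (Fin m) ℝ := W.submatrix e id with hMdef
  have hMrows : (fun k => M k) = (fun i => W i) ∘ e := rfl
  have hMrank : M.rank = r := by
    have : LinearIndependent ℝ (fun k => M k) := hMrows ▸ hind
    exact this.rank_matrix.trans (Fintype.card_fin r)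
  obtain ⟨r', g, hg, hindc, hspc⟩ := extract_basis (fun j => Mᵀ j)
  have hr' : r' = r := by
    have h1 : Fintype.card (Fin r') = Set.finrank ℝ (Set.range ((fun j => Mᵀ j) ∘ g)) :=
      linearIndependent_iff_card_eq_finrank_span.mp hindc
    have h2 : span ℝ (Set.range ((fun j => Mᵀ j) ∘ g)) = span ℝ (Set.range (fun j => Mᵀ j)) := by
      apply le_antisymm
      · exact span_mono (Set.range_comp_subset_range _ _)
      · rw [span_le]; rintro x ⟨j, rfl⟩; exact hspc j
    have h3 : Mᵀ.rank = Set.finrank ℝ (Set.range (fun j => Mᵀ j)) := by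
      rw [Matrix.rank_eq_finrank_span_row]; rfl
    rw [Fintype.card_fin] at h1
    rw [h1, Set.finrank, h2, ← Set.finrank, ← h3, Matrix.rank_transpose, hMrank]
  subst hr'
  set B : Matrix (Fin r') (Fin r') ℝ := M.submatrix id g with hBdef
  have hBunit : IsUnit B := by
    rw [← Matrix.linearIndependent_cols_iff_isUnit]
    exact hindc
  have hBdet0 : B.det ≠ 0 := (Matrix.isUnit_iff_isUnit_det B).mp hBunit |>.ne_zero
  have hBcastdet : B.det = (((A.submatrix e g).det : ℤ) : ℝ) := by
    have h := RingHom.map_det (Int.castRingHom ℝ) (A.submatrix e g)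
    simp only [RingHom.mapMatrix_apply] at h
    have hB2 : B = (A.submatrix e g).map (Int.cast : ℤ → ℝ) := by
      ext k l
      simp [hBdef, hMdef, hWdef]
    rw [hB2]
    rw [show ((Int.castRingHom ℝ) (A.submatrix e g).det : ℝ) = (((A.submatrix e g).det : ℤ) : ℝ) from rfl] at h
    exact h.symm
  have hdet1 : (1:ℝ) ≤ |B.det| := by
    rw [hBcastdet, ← Int.cast_abs]
    have hz : (A.submatrix e g).det ≠ 0 := by
      intro h; apply hBdet0; rw [hBcastdet, h, Int.cast_zero]
    exact_mod_cast Int.one_le_abs hz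
  set v' : Fin m → ℝ := (EuclideanSpace.equiv (Fin m) ℝ) v with hv'def
  set u : Fin r' → ℝ := fun k => (W.mulVec v') (e k) with hudef
  set x : Fin r' → ℝ := B⁻¹.mulVec u with hxdef
  set w : Fin m → ℝ := ∑ k, x k • (Pi.single (g k) (1:ℝ) : Fin m → ℝ) with hwdef
  set v₀ : EuclideanSpace ℝ (Fin m) := v - (EuclideanSpace.equiv (Fin m) ℝ).symm w with hv₀def
  have hv₀coe : (EuclideanSpace.equiv (Fin m) ℝ) v₀ = v' - w := by
    rw [hv₀def, map_sub, ← hv'def, ContinuousLinearEquiv.apply_symm_apply]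
  have hBx : B.mulVec x = u := by
    rw [hxdef, Matrix.mulVec_mulVec, Matrix.mul_nonsing_inv B ((Matrix.isUnit_iff_isUnit_det B).mp hBunit), Matrix.one_mulVec]
  have hWw : ∀ i, W.mulVec w i = ∑ k, x k * W i (g k) := by
    intro i
    show W i ⬝ᵥ w = _
    rw [hwdef]
    simp only [dotProduct, Finset.sum_apply, Pi.smul_apply, smul_eq_mul, Finset.mul_sum]
    rw [Finset.sum_comm]
    refine Finset.sum_congr rfl fun k _ => ?_
    rw [Finset.sum_eq_single (g k)]
    · simp [Pi.single_apply]; ring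
    · intro j _ hj; simp [Pi.single_apply, hj.symm]
    · simp
  have key : ∀ i, W.mulVec v' i = ∑ k, x k * W i (g k) := by
    intro i
    obtain ⟨c, hc⟩ := (mem_span_range_iff_exists_fun ℝ).mp (hsp i)
    have hWi : W i = ∑ k, c k • W (e k) := hc.symm
    calc W.mulVec v' i = (∑ k, c k • W (e k)) ⬝ᵥ v' := by rw [← hWi]; rfl
    _ = ∑ k, c k * u k := by
        simp only [dotProduct, Finset.sum_apply, Pi.smul_apply, smul_eq_mul,
          Finset.sum_mul]
        rw [Finset.sum_comm]
        refine Finset.sum_congr rfl fun k _ => ?_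
        rw [hudef]
        simp only [Matrix.mulVec, dotProduct, Finset.mul_sum]
        exact Finset.sum_congr rfl fun j _ => by ring
    _ = ∑ k', c k' * ∑ k, B k' k * x k := by rw [← hBx]; rfl
    _ = ∑ k, x k * ∑ k', c k' * B k' k := by
        simp_rw [Finset.mul_sum]
        rw [Finset.sum_comm]
        exact Finset.sum_congr rfl fun k _ => Finset.sum_congr rfl fun k' _ => by ring
    _ = ∑ k, x k * W i (g k) := by
        refine Finset.sum_congr rfl fun k _ => ?_
        congr 1
        conv_rhs => rw [hWi]
        simp only [Finset.sum_apply, Pi.smul_apply, smul_eq_mul]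
        rfl
  have hker : W.mulVec (v' - w) = 0 := by
    funext i
    rw [Matrix.mulVec_sub]
    simp only [Pi.sub_apply, Pi.zero_apply, hWw i, key i, sub_self]
  -- norm bound
  have hδ0 : 0 ≤ δ := le_trans (norm_nonneg _) hv
  have hE1 : (1:ℝ) ≤ (E:ℝ) := by exact_mod_cast hE
  set K : ℝ := (Nat.factorial r' : ℝ) * (E:ℝ) ^ r' with hKdef
  have hK0 : 0 ≤ K := by positivity
  have hBent : ∀ k l, |B k l| ≤ (E:ℝ) := by
    intro k l
    have h1 : |((A (e k) (g l) : ℤ) : ℝ)| ≤ (E:ℝ) := by exact_mod_cast hA _ _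
    simpa [hBdef, hMdef, hWdef, Matrix.map_apply] using h1
  have hBinv : ∀ k l, |B⁻¹ k l| ≤ K := by
    intro k l
    have hadj : |B.adjugate k l| ≤ K := by
      rw [Matrix.adjugate_apply]
      have hbd : ∀ i j, |(B.updateRow l (Pi.single k 1)) i j| ≤ (E:ℝ) := by
        intro i j
        rcases eq_or_ne i l with rfl | h
        · rw [Matrix.updateRow_self]
          rcases eq_or_ne j k with rfl | hj
          · simpa using hE1
          · rw [Pi.single_eq_of_ne hj]
            simpa using le_trans zero_le_one hE1
        · rw [Matrix.updateRow_ne h]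
          exact hBent i j
      have hd := Matrix.det_le (abv := (AbsoluteValue.abs : AbsoluteValue ℝ ℝ)) hbd
      simpa [hKdef, nsmul_eq_mul] using hd
    rw [Matrix.inv_def]
    have : (Ring.inverse B.det • B.adjugate) k l = (B.det)⁻¹ * B.adjugate k l := by
      simp [Ring.inverse_eq_inv']
    rw [this, abs_mul, abs_inv]
    calc |B.det|⁻¹ * |B.adjugate k l| ≤ 1 * K := by
          apply _root_.mul_le_mul _ hadj (abs_nonneg _) zero_le_one
          exact inv_le_one_of_one_le₀ hdet1
    _ = K := one_mul K
  have hu2 : ∑ j, u j ^ 2 ≤ δ ^ 2 := by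
    have h1 : ∑ j, u j ^ 2 = ∑ i ∈ Finset.univ.image e, (W.mulVec v') i ^ 2 := by
      rw [Finset.sum_image (fun a _ b _ h => he h)]
    rw [h1]
    have h2 : ∑ i ∈ Finset.univ.image e, (W.mulVec v') i ^ 2
        ≤ ∑ i, (W.mulVec v') i ^ 2 :=
      Finset.sum_le_sum_of_subset_of_nonneg (Finset.subset_univ _) (fun _ _ _ => sq_nonneg _)
    refine le_trans h2 ?_
    have h3 : ∑ i, (W.mulVec v') i ^ 2
        = ‖(EuclideanSpace.equiv (Fin n) ℝ).symm (W.mulVec v')‖ ^ 2 := by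
      rw [EuclideanSpace.norm_eq, Real.sq_sqrt (by positivity)]
      refine Finset.sum_congr rfl fun i _ => ?_
      rw [Real.norm_eq_abs, sq_abs]
      rfl
    rw [h3]
    exact pow_le_pow_left₀ (norm_nonneg _) hv 2
  have hx2 : ∑ k, x k ^ 2 ≤ ((r' : ℝ) * K * δ) ^ 2 := by
    have hxk : ∀ k, x k ^ 2 ≤ ((r' : ℝ) * K ^ 2) * δ ^ 2 := by
      intro k
      have hxeq : x k = ∑ j, B⁻¹ k j * u j := rfl
      calc x k ^ 2 = (∑ j, B⁻¹ k j * u j) ^ 2 := by rw [hxeq]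
      _ ≤ (∑ j, (B⁻¹ k j) ^ 2) * (∑ j, u j ^ 2) :=
          Finset.sum_mul_sq_le_sq_mul_sq Finset.univ _ _
      _ ≤ ((r' : ℝ) * K ^ 2) * δ ^ 2 := by
          apply _root_.mul_le_mul _ hu2 (by positivity) (by positivity)
          calc ∑ j, (B⁻¹ k j) ^ 2 ≤ ∑ _j : Fin r', K ^ 2 := by
                refine Finset.sum_le_sum fun j _ => ?_
                rw [← sq_abs]
                exact pow_le_pow_left₀ (abs_nonneg _) (hBinv k j) 2
          _ = (r' : ℝ) * K ^ 2 := by simp [mul_comm]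
    calc ∑ k, x k ^ 2 ≤ ∑ _k : Fin r', ((r' : ℝ) * K ^ 2) * δ ^ 2 :=
          Finset.sum_le_sum fun k _ => hxk k
    _ = (r' : ℝ) * (((r' : ℝ) * K ^ 2) * δ ^ 2) := by simp [mul_comm]
    _ = ((r' : ℝ) * K * δ) ^ 2 := by ring
  have hnormeq : ‖v - v₀‖ = Real.sqrt (∑ k, x k ^ 2) := by
    have hsub : v - v₀ = (EuclideanSpace.equiv (Fin m) ℝ).symm w := by
      rw [hv₀def, sub_sub_cancel]
    rw [hsub, EuclideanSpace.norm_eq]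
    congr 1
    have hcoord : ∀ i, ‖((EuclideanSpace.equiv (Fin m) ℝ).symm w) i‖ ^ 2 = w i ^ 2 := by
      intro i
      rw [show ((EuclideanSpace.equiv (Fin m) ℝ).symm w) i = w i from rfl,
        Real.norm_eq_abs, sq_abs]
    simp_rw [hcoord]
    have hwg : ∀ k, w (g k) = x k := by
      intro k
      rw [hwdef]
      rw [Finset.sum_apply]
      rw [Finset.sum_eq_single k]
      · simp
      · intro k' _ hk'
        have hne : g k ≠ g k' := fun h => hk' (hg h.symm)
        simp [Pi.single_eq_of_ne hne]
      · simp
    have hw0 : ∀ i ∉ Finset.univ.image g, w i = 0 := by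
      intro i hi
      rw [hwdef, Finset.sum_apply]
      apply Finset.sum_eq_zero
      intro k _
      have : g k ≠ i := by
        intro h
        exact hi (Finset.mem_image.mpr ⟨k, Finset.mem_univ _, h⟩)
      simp [Pi.single_apply, this]
    rw [← Finset.sum_subset (Finset.subset_univ (Finset.univ.image g))
        (fun i _ hi => by rw [hw0 i hi]; ring)]
    rw [Finset.sum_image (fun a _ b _ h => hg h)]
    exact Finset.sum_congr rfl fun k _ => by rw [hwg k]
  have hfinal : (r' : ℝ) * K ≤ ((n * m : ℝ) ^ ((n : ℝ) / 2)) * (E : ℝ) ^ n := by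
    rcases Nat.eq_zero_or_pos r' with h0 | hpos
    · subst h0
      simp only [Nat.cast_zero, zero_mul]
      positivity
    · have hrn : r' ≤ n := by simpa using Fintype.card_le_of_injective e he
      have hrm : r' ≤ m := by simpa using Fintype.card_le_of_injective g hg
      have hnm1 : (1:ℝ) ≤ (n : ℝ) * (m : ℝ) := by
        have : 1 * 1 ≤ n * m := Nat.mul_le_mul (le_trans hpos hrn) (le_trans hpos hrm)
        exact_mod_cast this
      set s : ℝ := Real.sqrt ((n : ℝ) * (m : ℝ)) with hsdef
      have hs1 : (1:ℝ) ≤ s := by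
        rw [show (1:ℝ) = Real.sqrt 1 by simp]
        exact Real.sqrt_le_sqrt hnm1
      have hrs : (r' : ℝ) ≤ s := by
        rw [hsdef, show ((r':ℕ):ℝ) = Real.sqrt ((r':ℝ)^2) by rw [Real.sqrt_sq (by positivity)]]
        apply Real.sqrt_le_sqrt
        have : (r' * r' : ℕ) ≤ n * m := Nat.mul_le_mul hrn hrm
        have h2 : ((r' * r' : ℕ) : ℝ) ≤ ((n * m : ℕ) : ℝ) := by exact_mod_cast this
        push_cast at h2
        nlinarith
      have hfactnat : r' * r'.factorial ≤ r' ^ r' := by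
        calc r' * r'.factorial ≤ r' * r' ^ (r' - 1) :=
              Nat.mul_le_mul_left _ (fact_le_pow_pred r')
        _ = r' ^ (r' - 1 + 1) := by rw [pow_succ]; ring
        _ = r' ^ r' := by congr 1; omega
      have hsn : s ^ n = (n * m : ℝ) ^ ((n : ℝ) / 2) := by
        rw [← Real.rpow_natCast s n, hsdef, Real.sqrt_eq_rpow,
          ← Real.rpow_mul (by positivity)]
        congr 1
        ring
      calc (r' : ℝ) * K = ((r' * r'.factorial : ℕ) : ℝ) * (E:ℝ) ^ r' := by
            rw [hKdef]; push_cast; ring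
      _ ≤ ((r' ^ r' : ℕ) : ℝ) * (E:ℝ) ^ r' := by
            apply mul_le_mul_of_nonneg_right _ (by positivity)
            exact_mod_cast hfactnat
      _ = ((r' : ℝ)) ^ r' * (E:ℝ) ^ r' := by push_cast; ring
      _ ≤ s ^ r' * (E:ℝ) ^ n := by
            apply _root_.mul_le_mul (pow_le_pow_left₀ (by positivity) hrs r')
              (pow_le_pow_right₀ hE1 hrn) (by positivity) (by positivity)
      _ ≤ s ^ n * (E:ℝ) ^ n := by
            apply mul_le_mul_of_nonneg_right (pow_le_pow_right₀ hs1 hrn) (by positivity)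
      _ = ((n * m : ℝ) ^ ((n : ℝ) / 2)) * (E : ℝ) ^ n := by rw [hsn]
  refine ⟨v₀, ?_, ?_⟩
  · rw [hv₀coe]
    exact hker
  · rw [hnormeq]
    calc Real.sqrt (∑ k, x k ^ 2) ≤ Real.sqrt (((r' : ℝ) * K * δ) ^ 2) :=
          Real.sqrt_le_sqrt hx2
    _ = (r' : ℝ) * K * δ := Real.sqrt_sq (by positivity)
    _ ≤ (((n * m : ℝ) ^ ((n : ℝ) / 2)) * (E : ℝ) ^ n) * δ :=
          mul_le_mul_of_nonneg_right hfinal hδ0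
    _ = δ * ((n * m : ℝ) ^ ((n : ℝ) / 2)) * (E : ℝ) ^ n := by ring
end

section
/- Every nonzero eigenvalue of A·Aᵀ, where A is an n×m integer matrix with all entries bounded in absolute value by E ≥ 1, has absolute value at least (nmE²)^{-n}. -/
open Polynomial Matrix

lemma myEvalCharpoly {R : Type*} [CommRing R] {n : Type*} [Fintype n] [DecidableEq n]
    (M : Matrix n n R) (t : R) :
    M.charpoly.eval t = (Matrix.diagonal (fun _ => t) - M).det := by
  rw [Matrix.charpoly, ← Polynomial.coe_evalRingHom, RingHom.map_det]
  congr 1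
  ext i j
  by_cases h : i = j <;>
    simp [Matrix.charmatrix_apply, h, Matrix.diagonal, Matrix.one_apply]

lemma myEigBound {n : Type*} [Fintype n] [DecidableEq n] (M : Matrix n n ℝ) (C : ℝ)
    (hC : ∀ i j, |M i j| ≤ C) (μ : ℝ) (v : n → ℝ) (hv : v ≠ 0)
    (hMv : M *ᵥ v = μ • v) : |μ| ≤ (Fintype.card n) * C := by
  obtain ⟨j0, hj0⟩ : ∃ j, v j ≠ 0 := by
    by_contra hcon
    push_neg at hcon
    exact hv (funext hcon)
  have hne : (Finset.univ : Finset n).Nonempty := ⟨j0, Finset.mem_univ _⟩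
  obtain ⟨i0, -, hi0⟩ := Finset.exists_max_image Finset.univ (fun i => |v i|) hne
  have hvpos : 0 < |v i0| := lt_of_lt_of_le (abs_pos.mpr hj0) (hi0 j0 (Finset.mem_univ _))
  have key : |μ| * |v i0| ≤ (Fintype.card n) * C * |v i0| := by
    have h1 : |μ * v i0| = |(M *ᵥ v) i0| := by rw [hMv]; simp [Pi.smul_apply]
    rw [← abs_mul, h1, Matrix.mulVec, dotProduct]
    calc |∑ j, M i0 j * v j| ≤ ∑ j, |M i0 j * v j| := Finset.abs_sum_le_sum_abs _ _
      _ ≤ ∑ _j : n, C * |v i0| := by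
          apply Finset.sum_le_sum
          intro j _
          rw [abs_mul]
          have h2 : 0 ≤ |v j| := abs_nonneg _
          have h3 : 0 ≤ C := le_trans (abs_nonneg _) (hC i0 j)
          exact mul_le_mul (hC i0 j) (hi0 j (Finset.mem_univ _)) h2 h3
      _ = (Fintype.card n) * C * |v i0| := by
          rw [Finset.sum_const, Finset.card_univ, nsmul_eq_mul]; ring
  exact le_of_mul_le_mul_right key hvpos

lemma myCharpolyProd {n : Type*} [Fintype n] [DecidableEq n] (M : Matrix n n ℝ)
    (hH : M.IsHermitian) :
    M.charpoly = ∏ i, (X - Polynomial.C (hH.eigenvalues i)) := by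
  apply Polynomial.funext
  intro t
  rw [myEvalCharpoly]
  set U := (Matrix.IsHermitian.eigenvectorUnitary hH : Matrix n n ℝ) with hU
  have hUU : U * star U = 1 :=
    Matrix.mem_unitaryGroup_iff.mp (Matrix.IsHermitian.eigenvectorUnitary hH).2
  have hst : M = U * Matrix.diagonal hH.eigenvalues * star U := by
    have := hH.spectral_theorem
    simpa using this
  have hdiag : Matrix.diagonal (fun _ : n => t) - M
      = U * (Matrix.diagonal (fun i => t - hH.eigenvalues i)) * star U := by
    have h1 : Matrix.diagonal (fun i : n => t - hH.eigenvalues i)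
        = Matrix.diagonal (fun _ : n => t) - Matrix.diagonal hH.eigenvalues := by
      rw [Matrix.diagonal_sub]
    have h2 : Matrix.diagonal (fun _ : n => t) = t • (1 : Matrix n n ℝ) := by
      rw [Matrix.smul_one_eq_diagonal]
    rw [h1, Matrix.mul_sub, Matrix.sub_mul, ← hst]
    congr 1
    rw [h2, Matrix.mul_smul, Matrix.mul_one, Matrix.smul_mul, hUU]
  rw [hdiag]
  rw [Matrix.det_mul, Matrix.det_mul, mul_comm (U.det), mul_assoc, ← Matrix.det_mul, hUU,
    Matrix.det_one, mul_one, Matrix.det_diagonal]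
  simp [Polynomial.eval_prod]

/-- every nonzero eigenvalue of `A·Aᵀ`, where `A` is an `n × m` integer
matrix with entries bounded by `E ≥ 1`, has absolute value at least `(nmE²)^{-n}`. -/
theorem stmt1 (n m : ℕ) (A : Matrix (Fin n) (Fin m) ℤ) (E : ℤ) (hE : 1 ≤ E)
    (hA : ∀ i j, |A i j| ≤ E) (μ : ℝ) (hμ : μ ≠ 0)
    (h : ∃ x : Fin n → ℝ, x ≠ 0 ∧
      ((A.map (Int.cast : ℤ → ℝ)) * (A.map (Int.cast : ℤ → ℝ)).transpose).mulVec x = μ • x) :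
    ((n * m : ℝ) * (E : ℝ) ^ 2) ^ (-(n : ℤ)) ≤ |μ| := by
  classical
  obtain ⟨x, hx0, hx⟩ := h
  rcases Nat.eq_zero_or_pos n with hn | hn
  · subst hn
    exact absurd (Subsingleton.elim x 0) hx0
  rcases Nat.eq_zero_or_pos m with hm | hm
  · subst hm
    have hMz : (A.map (Int.cast : ℤ → ℝ)) * (A.map (Int.cast : ℤ → ℝ)).transpose = 0 := by
      ext i j
      simp [Matrix.mul_apply]
    rw [hMz, Matrix.zero_mulVec] at hx
    rcases smul_eq_zero.mp hx.symm with h1 | h1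
    · exact absurd h1 hμ
    · exact absurd h1 hx0
  set Bm := A.map (Int.cast : ℤ → ℝ) with hBm
  set Mr := Bm * Bm.transpose with hMr
  set Mz := A * A.transpose with hMzdef
  have hMap : Mr = Mz.map (Int.cast : ℤ → ℝ) := by
    ext i j
    simp only [hMr, hMzdef, hBm, Matrix.mul_apply, Matrix.map_apply, Matrix.transpose_apply]
    push_cast
    ring
  have hH : Mr.IsHermitian := by
    have ht : Bm.transpose = Bm.conjTranspose := by
      ext i j; simp [Matrix.conjTranspose_apply]
    rw [hMr, ht]
    exact Matrix.isHermitian_mul_conjTranspose_self Bm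
  set lam := hH.eigenvalues with hlam
  have hEr : (1:ℝ) ≤ (E:ℝ) := by exact_mod_cast hE
  have hn' : (1:ℝ) ≤ (n:ℝ) := by exact_mod_cast hn
  have hm' : (1:ℝ) ≤ (m:ℝ) := by exact_mod_cast hm
  have hE2 : (1:ℝ) ≤ (E:ℝ)^2 := by nlinarith
  have hnm : (1:ℝ) ≤ (n:ℝ) * (m:ℝ) := by nlinarith
  have hB1 : (1:ℝ) ≤ (n * m : ℝ) * (E:ℝ)^2 := by
    have := mul_le_mul hnm hE2 zero_le_one (le_trans zero_le_one hnm)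
    simpa using this
  -- entry bound on Mr
  have hMrEntry : ∀ i j, |Mr i j| ≤ (m:ℝ) * (E:ℝ)^2 := by
    intro i j
    rw [hMr]
    simp only [Matrix.mul_apply, Matrix.transpose_apply, hBm, Matrix.map_apply]
    calc |∑ k, ((A i k : ℝ) * (A j k : ℝ))| ≤ ∑ k, |(A i k : ℝ) * (A j k : ℝ)| :=
          Finset.abs_sum_le_sum_abs _ _
      _ ≤ ∑ _k : Fin m, (E:ℝ) * (E:ℝ) := by
          apply Finset.sum_le_sum
          intro k _
          rw [abs_mul]
          have h1 : |(A i k : ℝ)| ≤ (E:ℝ) := by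
            rw [← Int.cast_abs]; exact_mod_cast hA i k
          have h2 : |(A j k : ℝ)| ≤ (E:ℝ) := by
            rw [← Int.cast_abs]; exact_mod_cast hA j k
          exact mul_le_mul h1 h2 (abs_nonneg _) (le_trans zero_le_one hEr)
      _ = (m:ℝ) * (E:ℝ)^2 := by
          rw [Finset.sum_const, Finset.card_univ, Fintype.card_fin, nsmul_eq_mul]; ring
  -- eigenvalue bound
  have hlamBnd : ∀ i, |lam i| ≤ (n * m : ℝ) * (E:ℝ)^2 := by
    intro i
    have hv := hH.mulVec_eigenvectorBasis i
    have hvne : ⇑(hH.eigenvectorBasis i) ≠ 0 := by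
      intro hcon
      apply hH.eigenvectorBasis.orthonormal.ne_zero i
      ext j
      exact congrFun hcon j
    have := myEigBound Mr ((m:ℝ)*(E:ℝ)^2) hMrEntry (lam i) _ hvne hv
    rw [Fintype.card_fin] at this
    calc |lam i| ≤ (n:ℝ) * ((m:ℝ) * (E:ℝ)^2) := this
      _ = (n * m : ℝ) * (E:ℝ)^2 := by ring
  have hcp := myCharpolyProd Mr hH
  rw [← hlam] at hcp
  set Z := Finset.univ.filter (fun i => lam i = 0) with hZ
  set N := Finset.univ.filter (fun i => ¬ lam i = 0) with hN
  have hsplit : Mr.charpoly = X ^ Z.card * ∏ i ∈ N, (X - Polynomial.C (lam i)) := by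
    rw [hcp, ← Finset.prod_filter_mul_prod_filter_not Finset.univ (fun i => lam i = 0)]
    congr 1
    rw [Finset.prod_congr rfl (fun i hi => ?_), Finset.prod_const]
    rw [(Finset.mem_filter.mp hi).2]
    simp
  have hcoeff : Mr.charpoly.coeff Z.card = ∏ i ∈ N, (- lam i) := by
    rw [hsplit]
    have h1 := Polynomial.coeff_X_pow_mul (∏ i ∈ N, (X - Polynomial.C (lam i))) Z.card 0
    rw [zero_add] at h1
    rw [h1, Polynomial.coeff_zero_eq_eval_zero, Polynomial.eval_prod]
    simp
  have hmapcp : Mz.charpoly.map (Int.castRingHom ℝ) = Mr.charpoly := by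
    rw [hMap]
    exact (Matrix.charpoly_map Mz (Int.castRingHom ℝ)).symm
  have hcZ : ((Mz.charpoly.coeff Z.card : ℤ) : ℝ) = ∏ i ∈ N, (-lam i) := by
    rw [← hcoeff, ← hmapcp, Polynomial.coeff_map]
    simp
  have hprodne : (∏ i ∈ N, (-lam i)) ≠ 0 := by
    rw [Finset.prod_ne_zero_iff]
    intro i hi
    have := (Finset.mem_filter.mp hi).2
    simpa using this
  have hcne : Mz.charpoly.coeff Z.card ≠ 0 := by
    intro h0
    rw [h0] at hcZ
    exact hprodne (by simpa using hcZ.symm)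
  have h1le' : (1:ℝ) ≤ ∏ i ∈ N, |lam i| := by
    have h1 : (1:ℝ) ≤ |∏ i ∈ N, (-lam i)| := by
      rw [← hcZ, ← Int.cast_abs]
      exact_mod_cast Int.one_le_abs hcne
    rwa [Finset.abs_prod, Finset.prod_congr rfl (fun i _ => abs_neg (lam i))] at h1
  -- μ is an eigenvalue
  have hdet0 : (Matrix.diagonal (fun _ : Fin n => μ) - Mr).det = 0 := by
    rw [← Matrix.exists_mulVec_eq_zero_iff]
    refine ⟨x, hx0, ?_⟩
    rw [Matrix.sub_mulVec]
    have h2 : Matrix.diagonal (fun _ : Fin n => μ) = μ • (1 : Matrix (Fin n) (Fin n) ℝ) := by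
      rw [Matrix.smul_one_eq_diagonal]
    rw [h2, Matrix.smul_mulVec, Matrix.one_mulVec, hx, sub_self]
  have hev0 : Polynomial.eval μ Mr.charpoly = 0 := by
    rw [myEvalCharpoly]; exact hdet0
  obtain ⟨i0, hi0N, hi0⟩ : ∃ i0 ∈ N, lam i0 = μ := by
    rw [hcp, Polynomial.eval_prod] at hev0
    simp only [Polynomial.eval_sub, Polynomial.eval_X, Polynomial.eval_C] at hev0
    obtain ⟨i0, -, hi0⟩ := Finset.prod_eq_zero_iff.mp hev0
    have heq : lam i0 = μ := by linarith [sub_eq_zero.mp hi0]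
    refine ⟨i0, Finset.mem_filter.mpr ⟨Finset.mem_univ _, ?_⟩, heq⟩
    rw [heq]; exact hμ
  -- final bound
  set Bn : ℝ := (n * m : ℝ) * (E:ℝ)^2 with hBn
  have hrest : ∏ i ∈ N.erase i0, |lam i| ≤ Bn ^ (N.erase i0).card := by
    calc ∏ i ∈ N.erase i0, |lam i| ≤ ∏ _i ∈ N.erase i0, Bn :=
          Finset.prod_le_prod (fun i _ => abs_nonneg _) (fun i _ => hlamBnd i)
      _ = Bn ^ (N.erase i0).card := Finset.prod_const _
  have hcard : (N.erase i0).card ≤ n := by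
    calc (N.erase i0).card ≤ N.card := Finset.card_erase_le
      _ ≤ (Finset.univ : Finset (Fin n)).card := Finset.card_filter_le _ _
      _ = n := by simp
  have hpow : Bn ^ (N.erase i0).card ≤ Bn ^ n := pow_le_pow_right₀ hB1 hcard
  have hmain : 1 ≤ |μ| * Bn ^ n := by
    have hme : |lam i0| * ∏ i ∈ N.erase i0, |lam i| = ∏ i ∈ N, |lam i| :=
      Finset.mul_prod_erase N (fun i => |lam i|) hi0N
    calc (1:ℝ) ≤ ∏ i ∈ N, |lam i| := h1le'
      _ = |μ| * ∏ i ∈ N.erase i0, |lam i| := by rw [← hme, hi0]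
      _ ≤ |μ| * Bn ^ n := by
          apply mul_le_mul_of_nonneg_left (le_trans hrest hpow) (abs_nonneg _)
  have hBpos : (0:ℝ) < Bn ^ n := by positivity
  rw [_root_.zpow_neg, zpow_natCast]
  apply le_of_mul_le_mul_right _ hBpos
  rw [inv_mul_cancel₀ (ne_of_gt hBpos)]
  exact hmain
end

section
/- Let f : V → W be a linear map between finite-dimensional real inner product spaces, δ > 0, and W[δ] the span of left singular vectors with singular value ≥ δ (as above). If V₁ ⊆ V is a subspace such that ‖f(v)‖ ≥ δ‖v‖ for all v ∈ V₁, then dim W[δ] ≥ dim V₁. -/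
open scoped RealInnerProductSpace

/-- with a singular value decomposition `f (v i) = σ i • w i` as in the
context, if `V₁` is a subspace with `‖f x‖ ≥ δ‖x‖` for all `x ∈ V₁`, then the span
`W[δ]` of the left singular vectors with singular value `≥ δ` has dimension
at least `dim V₁`. -/
theorem stmt4 {V W : Type*} [NormedAddCommGroup V] [InnerProductSpace ℝ V]
    [FiniteDimensional ℝ V] [NormedAddCommGroup W] [InnerProductSpace ℝ W]
    [FiniteDimensional ℝ W]
    (f : V →ₗ[ℝ] W) {m : ℕ} (v : Fin m → V) (w : Fin m → W) (σ : Fin m → ℝ)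
    (hv : Orthonormal ℝ v) (hvb : Submodule.span ℝ (Set.range v) = ⊤)
    (hw : ∀ i j, i ≠ j → ⟪w i, w j⟫ = (0 : ℝ))
    (hwn : ∀ i, ‖w i‖ = 1 ∨ w i = 0)
    (hσ : ∀ i, 0 ≤ σ i)
    (hf : ∀ i, f (v i) = σ i • w i)
    (δ : ℝ) (hδ : 0 < δ)
    (V₁ : Submodule ℝ V) (hV₁ : ∀ x ∈ V₁, δ * ‖x‖ ≤ ‖f x‖) :
    Module.finrank ℝ V₁ ≤
      Module.finrank ℝ (Submodule.span ℝ {y | ∃ i, δ ≤ σ i ∧ y = w i}) := by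
  classical
  set S' : Finset (Fin m) := Finset.univ.filter (fun i => δ ≤ σ i ∧ w i ≠ 0) with hS'
  have hmemS' : ∀ i, i ∈ S' ↔ (δ ≤ σ i ∧ w i ≠ 0) := by
    intro i; simp [hS']
  -- the coordinate map
  let L : V →ₗ[ℝ] ({i // i ∈ S'} → ℝ) :=
    { toFun := fun x i => ⟪v i.1, x⟫
      map_add' := fun x y => by ext i; simp [inner_add_right]
      map_smul' := fun c x => by ext i; simp [inner_smul_right] }
  -- injectivity on V₁
  have key : ∀ x ∈ V₁, (∀ i ∈ S', ⟪v i, x⟫ = 0) → x = 0 := by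
    intro x hx hzero
    set c : Fin m → ℝ := fun i => ⟪v i, x⟫ with hc
    -- expansion of x
    let b : OrthonormalBasis (Fin m) ℝ V := OrthonormalBasis.mk hv hvb.ge
    have hbv : ∀ i, b i = v i := fun i => by simp [b, OrthonormalBasis.coe_mk]
    have hxsum : ∑ i, c i • v i = x := by
      have := b.sum_repr' x
      simpa [hbv, hc] using this
    -- norm of x
    have hnx : ‖x‖ ^ 2 = ∑ i, c i ^ 2 := by
      rw [← real_inner_self_eq_norm_sq, ← hxsum]
      rw [sum_inner]
      refine Finset.sum_congr rfl fun i _ => ?_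
      rw [inner_sum]
      simp only [real_inner_smul_left, real_inner_smul_right]
      rw [Finset.sum_eq_single i]
      · rw [orthonormal_iff_ite.mp hv i i]; simp [sq]
      · intro j _ hji
        rw [orthonormal_iff_ite.mp hv i j]; simp [hji.symm]
      · simp
    -- norm of f x
    have hfx : f x = ∑ i, (c i * σ i) • w i := by
      rw [← hxsum, map_sum]
      refine Finset.sum_congr rfl fun i _ => ?_
      rw [map_smul, hf i, smul_smul]
    have hwii : ∀ i, ⟪w i, w i⟫ = ‖w i‖ ^ 2 := fun i => real_inner_self_eq_norm_sq _
    have hnfx : ‖f x‖ ^ 2 = ∑ i, (c i * σ i) ^ 2 * ‖w i‖ ^ 2 := by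
      rw [← real_inner_self_eq_norm_sq, hfx, sum_inner]
      refine Finset.sum_congr rfl fun i _ => ?_
      rw [inner_sum]
      simp only [real_inner_smul_left, real_inner_smul_right]
      rw [Finset.sum_eq_single i]
      · rw [hwii i]; ring
      · intro j _ hji
        rw [hw i j hji.symm]; ring
      · simp
    -- the inequality
    have hineq : δ ^ 2 * ∑ i, c i ^ 2 ≤ ∑ i, (c i * σ i) ^ 2 * ‖w i‖ ^ 2 := by
      have h1 := hV₁ x hx
      have h2 : (δ * ‖x‖) ^ 2 ≤ ‖f x‖ ^ 2 := by
        apply pow_le_pow_left₀ (by positivity) h1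
      calc δ ^ 2 * ∑ i, c i ^ 2 = (δ * ‖x‖) ^ 2 := by rw [mul_pow, hnx]
        _ ≤ ‖f x‖ ^ 2 := h2
        _ = _ := hnfx
    have hsumle : ∑ i, (δ ^ 2 * c i ^ 2 - (c i * σ i) ^ 2 * ‖w i‖ ^ 2) ≤ 0 := by
      rw [Finset.sum_sub_distrib, ← Finset.mul_sum]
      linarith
    have hterm : ∀ i ∈ Finset.univ, 0 ≤ δ ^ 2 * c i ^ 2 - (c i * σ i) ^ 2 * ‖w i‖ ^ 2 := by
      intro i _
      rcases hwn i with h1 | h1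
      · by_cases h2 : δ ≤ σ i
        · have : i ∈ S' := (hmemS' i).mpr ⟨h2, by intro h; rw [h] at h1; simp at h1⟩
          have hci : c i = 0 := hzero i this
          rw [hci]; simp
        · push_neg at h2
          have : σ i ^ 2 ≤ δ ^ 2 := by nlinarith [hσ i]
          rw [h1]; nlinarith [sq_nonneg (c i)]
      · rw [h1]; simp; positivity
    have hsum0 : ∑ i, (δ ^ 2 * c i ^ 2 - (c i * σ i) ^ 2 * ‖w i‖ ^ 2) = 0 :=
      le_antisymm hsumle (Finset.sum_nonneg hterm)
    have heach := (Finset.sum_eq_zero_iff_of_nonneg hterm).mp hsum0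
    have hc0 : ∀ i, c i = 0 := by
      intro i
      have hi := heach i (Finset.mem_univ i)
      rcases hwn i with h1 | h1
      · by_cases h2 : δ ≤ σ i
        · have : i ∈ S' := (hmemS' i).mpr ⟨h2, by intro h; rw [h] at h1; simp at h1⟩
          simpa [hc] using hzero i this
        · push_neg at h2
          rw [h1] at hi
          have hlt : σ i ^ 2 < δ ^ 2 := by nlinarith [hσ i]
          have h3 : (δ ^ 2 - σ i ^ 2) * c i ^ 2 = 0 := by linear_combination hi
          rcases mul_eq_zero.mp h3 with h | h
          · linarith
          · exact pow_eq_zero_iff (n := 2) (by norm_num) |>.mp h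
      · rw [h1] at hi
        have : δ ^ 2 * c i ^ 2 = 0 := by simpa using hi
        have : c i ^ 2 = 0 := by
          rcases mul_eq_zero.mp this with h | h
          · nlinarith
          · exact h
        exact pow_eq_zero_iff (n := 2) (by norm_num) |>.mp this
    rw [← hxsum]
    simp [hc0]
  -- injectivity of L restricted to V₁
  have hinj : Function.Injective (L.comp V₁.subtype) := by
    rw [← LinearMap.ker_eq_bot, LinearMap.ker_eq_bot']
    intro ⟨x, hx⟩ hLx
    have : ∀ i ∈ S', ⟪v i, x⟫ = 0 := by
      intro i hi
      have := congrFun hLx ⟨i, hi⟩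
      simpa [L] using this
    exact Subtype.ext (key x hx this)
  have h1 : Module.finrank ℝ V₁ ≤ S'.card := by
    have := LinearMap.finrank_le_finrank_of_injective hinj
    rwa [Module.finrank_fintype_fun_eq_card, Fintype.card_coe] at this
  -- the span contains an orthonormal family indexed by S'
  have horth : Orthonormal ℝ (fun i : {i // i ∈ S'} => w i.1) := by
    constructor
    · intro i
      rcases hwn i.1 with h | h
      · exact h
      · exact absurd h ((hmemS' i.1).mp i.2).2
    · intro i j hij
      exact hw i.1 j.1 (fun h => hij (Subtype.ext h))
  have hli := horth.linearIndependent
  have hcard : Module.finrank ℝ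
      (Submodule.span ℝ (Set.range (fun i : {i // i ∈ S'} => w i.1))) = S'.card := by
    rw [finrank_span_eq_card hli, Fintype.card_coe]
  have hle : Submodule.span ℝ (Set.range (fun i : {i // i ∈ S'} => w i.1)) ≤
      Submodule.span ℝ {y | ∃ i, δ ≤ σ i ∧ y = w i} := by
    apply Submodule.span_mono
    rintro y ⟨i, rfl⟩
    exact ⟨i.1, ((hmemS' i.1).mp i.2).1, rfl⟩
  calc Module.finrank ℝ V₁ ≤ S'.card := h1
    _ = _ := hcard.symm
    _ ≤ _ := Submodule.finrank_mono hle
end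

section
/- Let V be a finite-dimensional real inner product space and U₁, U₂ ⊆ V subspaces of equal dimension r. Suppose there is an orthonormal basis u₁,…,u_r of U₁ such that dist(u_i, U₂) ≤ ε for all i, with ε sufficiently small (depending only on dim V). Then there exists a constant C, depending only on dim V, and orthonormal bases u'₁,…,u'_r of U₁ and v₁,…,v_r of U₂ with ‖u'_i − v_i‖ ≤ C·ε for all i. -/
set_option maxHeartbeats 1000000

open Module Metric Submodule

open scoped RealInnerProductSpace

private lemma trace_aux {E F : Type*} [NormedAddCommGroup E] [InnerProductSpace ℝ E]
    [NormedAddCommGroup F] [InnerProductSpace ℝ F] [FiniteDimensional ℝ E]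
    [FiniteDimensional ℝ F] {ι κ : Type*} [Fintype ι] [Fintype κ]
    (e : OrthonormalBasis ι ℝ E) (f : OrthonormalBasis κ ℝ F) (T : E →ₗ[ℝ] F) :
    ∑ i, ⟪T (e i), T (e i)⟫ = ∑ j, ⟪(LinearMap.adjoint T) (f j), (LinearMap.adjoint T) (f j)⟫ := by
  have h1 : ∀ i, ⟪T (e i), T (e i)⟫ = ∑ j, ⟪T (e i), f j⟫ * ⟪f j, T (e i)⟫ :=
    fun i => (f.sum_inner_mul_inner _ _).symm
  have h2 : ∀ j, ⟪(LinearMap.adjoint T) (f j), (LinearMap.adjoint T) (f j)⟫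
      = ∑ i, ⟪(LinearMap.adjoint T) (f j), e i⟫ * ⟪e i, (LinearMap.adjoint T) (f j)⟫ :=
    fun j => (e.sum_inner_mul_inner _ _).symm
  simp only [h1, h2]
  rw [Finset.sum_comm]
  congr 1; ext j; congr 1; ext i
  rw [LinearMap.adjoint_inner_left, LinearMap.adjoint_inner_right]
  ring

/-- if two `r`-dimensional subspaces `U₁, U₂` of an inner product space `V`
are such that some orthonormal basis of `U₁` lies within `ε` of `U₂` (with `ε`
sufficiently small depending only on `dim V`), then `U₁` and `U₂` admit orthonormal
bases that are pairwise within `C·ε`, with `C` depending only on `dim V`. -/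
theorem stmt5 (n : ℕ) :
    ∃ ε₀ C : ℝ, 0 < ε₀ ∧ 0 < C ∧
      ∀ (V : Type) (_ : NormedAddCommGroup V), ∀ (_ : InnerProductSpace ℝ V),
        ∀ (_ : FiniteDimensional ℝ V),
        Module.finrank ℝ V = n →
        ∀ (r : ℕ) (U₁ U₂ : Submodule ℝ V) (u : Fin r → V) (ε : ℝ),
          0 < ε → ε ≤ ε₀ →
          Module.finrank ℝ U₁ = r → Module.finrank ℝ U₂ = r →
          Orthonormal ℝ u → (∀ i, u i ∈ U₁) →
          (∀ i, Metric.infDist (u i) (U₂ : Set V) ≤ ε) →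
          ∃ u' v : Fin r → V, Orthonormal ℝ u' ∧ (∀ i, u' i ∈ U₁) ∧
            Orthonormal ℝ v ∧ (∀ i, v i ∈ U₂) ∧ ∀ i, ‖u' i - v i‖ ≤ C * ε := by
  refine ⟨(Real.sqrt (2 * (n + 1)))⁻¹, Real.sqrt (2 * n) + 1, by positivity, by positivity, ?_⟩
  intro V _ _ _ hV r U₁ U₂ u ε hε hεε₀ hr1 hr2 hu huU₁ hdist
  have hrn : r ≤ n := by
    rw [← hr1, ← hV]; exact Submodule.finrank_le U₁
  -- the restricted orthogonal projection T : U₁ → U₂ and S = T† T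
  set T : U₁ →ₗ[ℝ] U₂ := (orthogonalProjection U₂).toLinearMap ∘ₗ U₁.subtype with hT
  have hTapp : ∀ x : U₁, T x = orthogonalProjection U₂ (x : V) := fun x => rfl
  set S : U₁ →ₗ[ℝ] U₁ := (LinearMap.adjoint T) ∘ₗ T with hSdef
  have hS : S.IsSymmetric := by
    intro x y
    simp only [hSdef, LinearMap.comp_apply]
    rw [LinearMap.adjoint_inner_left, LinearMap.adjoint_inner_right]
  set a := hS.eigenvectorBasis hr1 with ha
  set μ := hS.eigenvalues hr1 with hμ
  have hSa : ∀ i, S (a i) = (μ i) • a i := fun i => hS.apply_eigenvectorBasis hr1 i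
  -- inner products of the T (a i)
  have hTa : ∀ i j, ⟪T (a i), T (a j)⟫ = if i = j then μ i else 0 := by
    intro i j
    have key : ⟪a i, S (a j)⟫ = ⟪T (a i), T (a j)⟫ :=
      LinearMap.adjoint_inner_right T (a i) (T (a j))
    rw [← key, hSa j, real_inner_smul_right, orthonormal_iff_ite.mp a.orthonormal]
    by_cases h : i = j <;> simp [h]
  -- Pythagoras facts for arbitrary x
  have pyth : ∀ x : V, ‖x‖ ^ 2 = ‖(orthogonalProjection U₂ x : V)‖ ^ 2
      + ‖x - orthogonalProjection U₂ x‖ ^ 2 := by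
    intro x
    have h0 : ⟪x - orthogonalProjection U₂ x, (orthogonalProjection U₂ x : V)⟫ = 0 :=
      Submodule.starProjection_inner_eq_zero (K := U₂) (v := x) (hw := (orthogonalProjection U₂ x).2)
    calc ‖x‖ ^ 2 = ‖(x - orthogonalProjection U₂ x) + (orthogonalProjection U₂ x : V)‖ ^ 2 := by
          rw [sub_add_cancel]
      _ = _ := by rw [norm_add_sq_real, h0]; ring
  -- the projection is the closest point, hence within ε
  have hPle : ∀ i, ‖u i - orthogonalProjection U₂ (u i)‖ ≤ ε := by
    intro i
    refine le_trans ?_ (hdist i)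
    by_contra hlt
    push_neg at hlt
    obtain ⟨y, hy, hylt⟩ := (infDist_lt_iff ⟨0, U₂.zero_mem⟩).mp hlt
    have hmin : ‖u i - orthogonalProjection U₂ (u i)‖ ≤ dist (u i) y := by
      rw [dist_eq_norm]
      have h0 : ⟪u i - orthogonalProjection U₂ (u i), (orthogonalProjection U₂ (u i) : V) - y⟫ = 0 := by
        have : (orthogonalProjection U₂ (u i) : V) - y ∈ U₂ :=
          U₂.sub_mem (orthogonalProjection U₂ (u i)).2 hy
        exact Submodule.starProjection_inner_eq_zero (K := U₂) (v := u i) (hw := this)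
      have hsq : ‖u i - y‖ ^ 2 = ‖u i - orthogonalProjection U₂ (u i)‖ ^ 2
          + ‖(orthogonalProjection U₂ (u i) : V) - y‖ ^ 2 := by
        calc ‖u i - y‖ ^ 2
            = ‖(u i - orthogonalProjection U₂ (u i)) + ((orthogonalProjection U₂ (u i) : V) - y)‖ ^ 2 := by
              rw [sub_add_sub_cancel]
          _ = _ := by rw [norm_add_sq_real, h0]; ring
      nlinarith [norm_nonneg (u i - y), norm_nonneg (u i - orthogonalProjection U₂ (u i)),
        sq_nonneg ‖(orthogonalProjection U₂ (u i) : V) - y‖]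
    exact absurd hylt (not_lt.mpr hmin)
  -- u as an orthonormal basis of U₁
  set uW : Fin r → U₁ := fun i => ⟨u i, huU₁ i⟩ with hWdef
  have hW_on : Orthonormal ℝ uW := by
    rw [orthonormal_iff_ite] at hu ⊢
    intro i j
    simpa [hWdef, Submodule.coe_inner] using hu i j
  have hspan : ⊤ ≤ Submodule.span ℝ (Set.range uW) := by
    have hfr := finrank_span_eq_card hW_on.linearIndependent
    exact (Submodule.eq_top_of_finrank_eq (by rw [hfr, Fintype.card_fin, hr1])).ge
  set ub : OrthonormalBasis (Fin r) ℝ U₁ := OrthonormalBasis.mk hW_on hspan with hub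
  have hubapp : ∀ i, ub i = uW i := fun i => by rw [hub, OrthonormalBasis.coe_mk]
  -- trace identity
  have htr : ∑ i, ⟪T (ub i), T (ub i)⟫ = ∑ i, ⟪T (a i), T (a i)⟫ := by
    rw [trace_aux ub (stdOrthonormalBasis ℝ U₂) T, trace_aux a (stdOrthonormalBasis ℝ U₂) T]
  have hμval : ∀ i, ⟪T (a i), T (a i)⟫ = μ i := fun i => by rw [hTa i i, if_pos rfl]
  -- lower bound on projected norms of the u i
  have hlow : ∀ i, 1 - ε ^ 2 ≤ ⟪T (ub i), T (ub i)⟫ := by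
    intro i
    have hTub : ((T (ub i) : U₂) : V) = orthogonalProjection U₂ (u i) := by
      rw [hubapp]; rfl
    have h1 : ⟪T (ub i), T (ub i)⟫ = ‖(orthogonalProjection U₂ (u i) : V)‖ ^ 2 := by
      rw [Submodule.coe_inner, hTub, real_inner_self_eq_norm_sq]
    rw [h1]
    have hp := pyth (u i)
    have h2 : ‖u i - orthogonalProjection U₂ (u i)‖ ^ 2 ≤ ε ^ 2 := by
      have := hPle i; nlinarith [norm_nonneg (u i - orthogonalProjection U₂ (u i))]
    have h3 : ‖u i‖ = 1 := hu.1 i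
    rw [h3] at hp
    nlinarith
  -- eigenvalues are at most 1
  have hμle : ∀ i, μ i ≤ 1 := by
    intro i
    have h1 : μ i = ‖((T (a i) : U₂) : V)‖ ^ 2 := by
      rw [← hμval i, Submodule.coe_inner, real_inner_self_eq_norm_sq]
    have hTA : ((T (a i) : U₂) : V) = orthogonalProjection U₂ ((a i : V)) := rfl
    have hp := pyth ((a i : V))
    have h3 : ‖(a i : V)‖ = 1 := by
      rw [← Submodule.coe_norm]; exact a.orthonormal.1 i
    rw [h3] at hp
    rw [h1, hTA]
    nlinarith [sq_nonneg ‖(a i : V) - orthogonalProjection U₂ (a i : V)‖]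
  -- sum bound on eigenvalue defects
  have hsum : ∑ i, (1 - μ i) ≤ (r : ℝ) * ε ^ 2 := by
    have h1 : (r : ℝ) * (1 - ε ^ 2) ≤ ∑ i, μ i := by
      calc (r : ℝ) * (1 - ε ^ 2) = ∑ _i : Fin r, (1 - ε ^ 2) := by
            rw [Finset.sum_const]; simp [mul_comm]
        _ ≤ ∑ i, ⟪T (ub i), T (ub i)⟫ := Finset.sum_le_sum fun i _ => hlow i
        _ = ∑ i, μ i := by rw [htr]; exact Finset.sum_congr rfl fun i _ => hμval i
    have h2 : ∑ i, (1 - μ i) = (r : ℝ) - ∑ i, μ i := by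
      rw [Finset.sum_sub_distrib]; simp
    nlinarith
  have hμlow : ∀ i, 1 - (n : ℝ) * ε ^ 2 ≤ μ i := by
    intro i
    have h1 : 1 - μ i ≤ ∑ j, (1 - μ j) :=
      Finset.single_le_sum (fun j _ => sub_nonneg.mpr (hμle j)) (Finset.mem_univ i)
    have h2 : (r : ℝ) ≤ (n : ℝ) := Nat.cast_le.mpr hrn
    nlinarith [sq_nonneg ε]
  have hε2 : ε ^ 2 ≤ (2 * ((n : ℝ) + 1))⁻¹ := by
    have h2 : (0 : ℝ) < 2 * ((n : ℝ) + 1) := by positivity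
    have hs : (Real.sqrt (2 * ((n : ℝ) + 1)))⁻¹ ^ 2 = (2 * ((n : ℝ) + 1))⁻¹ := by
      rw [← one_div, div_pow, Real.sq_sqrt h2.le, one_pow, one_div]
    calc ε ^ 2 ≤ (Real.sqrt (2 * ((n : ℝ) + 1)))⁻¹ ^ 2 := by
          apply pow_le_pow_left₀ hε.le
          exact_mod_cast hεε₀
      _ = _ := hs
  have hμpos : ∀ i, (1 : ℝ) / 2 ≤ μ i := by
    intro i
    have h1 := hμlow i
    have h2 : (0 : ℝ) < 2 * ((n : ℝ) + 1) := by positivity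
    have h3 : (n : ℝ) * ε ^ 2 ≤ (n : ℝ) * (2 * ((n : ℝ) + 1))⁻¹ := by
      apply mul_le_mul_of_nonneg_left hε2 (Nat.cast_nonneg n)
    have h4 : (n : ℝ) * (2 * ((n : ℝ) + 1))⁻¹ ≤ 1 / 2 := by
      rw [mul_inv_le_iff₀ h2]
      nlinarith [Nat.cast_nonneg (α := ℝ) n]
    linarith
  have hμ0 : ∀ i, 0 < μ i := fun i => lt_of_lt_of_le (by norm_num) (hμpos i)
  set v : Fin r → V := fun i => (Real.sqrt (μ i))⁻¹ • (((T (a i)) : U₂) : V) with hvdef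
  have hinnerV : ∀ i j, ⟪(((T (a i)) : U₂) : V), (((T (a j)) : U₂) : V)⟫
      = if i = j then μ i else 0 := by
    intro i j; rw [← Submodule.coe_inner]; exact hTa i j
  have hvon : Orthonormal ℝ v := by
    rw [orthonormal_iff_ite]
    intro i j
    simp only [hvdef, real_inner_smul_left, real_inner_smul_right]
    rw [hinnerV i j]
    by_cases h : i = j
    · subst h
      simp only [if_pos rfl]
      have hs : Real.sqrt (μ i) * Real.sqrt (μ i) = μ i := Real.mul_self_sqrt (hμ0 i).le
      have hspos : 0 < Real.sqrt (μ i) := Real.sqrt_pos.mpr (hμ0 i)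
      field_simp
      simp [Real.sq_sqrt (hμ0 i).le]
    · simp [h]
  refine ⟨fun i => (a i : V), v, ?_, fun i => (a i).2, hvon, ?_, ?_⟩
  · rw [orthonormal_iff_ite]
    intro i j
    rw [← Submodule.coe_inner]
    exact orthonormal_iff_ite.mp a.orthonormal i j
  · intro i
    simp only [hvdef]
    exact U₂.smul_mem _ ((T (a i)).2)
  · intro i
    have h1 : ‖(a i : V)‖ = 1 := by
      rw [← Submodule.coe_norm]; exact a.orthonormal.1 i
    have h2 : ‖v i‖ = 1 := hvon.1 i
    have hip : ⟪(a i : V), v i⟫ = Real.sqrt (μ i) := by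
      simp only [hvdef, real_inner_smul_right]
      have hAT : ⟪(a i : V), (((T (a i)) : U₂) : V)⟫ = μ i := by
        have h0 : ⟪(a i : V) - orthogonalProjection U₂ ((a i : V)),
            (orthogonalProjection U₂ ((a i : V)) : V)⟫ = 0 :=
          Submodule.starProjection_inner_eq_zero (K := U₂) (v := (a i : V)) (hw := (orthogonalProjection U₂ _).2)
        have hsub := inner_sub_left (𝕜 := ℝ) ((a i : V))
          ((orthogonalProjection U₂ ((a i : V)) : V)) ((orthogonalProjection U₂ ((a i : V)) : V))
        have hPP : ⟪(((T (a i)) : U₂) : V), (((T (a i)) : U₂) : V)⟫ = μ i := by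
          rw [hinnerV i i]; simp
        have hx : (((T (a i)) : U₂) : V) = (orthogonalProjection U₂ ((a i : V)) : V) := rfl
        rw [hx] at hPP ⊢
        rw [h0] at hsub
        linarith
      rw [hAT]
      have hs : Real.sqrt (μ i) * Real.sqrt (μ i) = μ i := Real.mul_self_sqrt (hμ0 i).le
      have hspos : 0 < Real.sqrt (μ i) := Real.sqrt_pos.mpr (hμ0 i)
      field_simp
      rw [Real.sq_sqrt (hμ0 i).le]
    have hb : ‖(a i : V) - v i‖ ^ 2 ≤ 2 * (n : ℝ) * ε ^ 2 := by
      rw [norm_sub_sq_real, h1, h2, hip]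
      have hl := hμlow i
      have hle := hμle i
      have h0μ := (hμ0 i).le
      have hs1 : Real.sqrt (μ i) ≤ 1 := Real.sqrt_le_one.mpr hle
      have hsq : Real.sqrt (μ i) ^ 2 = μ i := Real.sq_sqrt h0μ
      have hsn : 0 ≤ Real.sqrt (μ i) := Real.sqrt_nonneg _
      nlinarith [mul_nonneg hsn (sub_nonneg.mpr hs1)]
    have hC : ‖(a i : V) - v i‖ ≤ Real.sqrt (2 * n) * ε := by
      have hnn : (0 : ℝ) ≤ 2 * (n : ℝ) := by positivity
      have hmono := Real.sqrt_le_sqrt hb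
      rwa [Real.sqrt_sq (norm_nonneg _),
        show 2 * (n : ℝ) * ε ^ 2 = (2 * (n : ℝ)) * ε ^ 2 by ring,
        Real.sqrt_mul hnn, Real.sqrt_sq hε.le] at hmono
    have hfin : Real.sqrt (2 * (n : ℝ)) * ε ≤ (Real.sqrt (2 * (n : ℝ)) + 1) * ε :=
      mul_le_mul_of_nonneg_right (le_add_of_nonneg_right zero_le_one) hε.le
    exact hC.trans hfin
end

section
/- Let μ be a probability measure preserved by a measure-preserving flow (u_t)_{t∈ℝ} on a probability space, and let f ∈ L²(μ) with ∫ f dμ = 0. Suppose |⟨u_t f, f⟩| ≤ C·(1+|t|)^{−η} for all t, with constants C > 0 and η ∈ (0,1). Let M be an integer with M ≥ 10 + 10/η, and for T ≥ 1 set D_T(f)(x) = ((T+1)^M − T^M)^{−1} ∫_{T^M}^{(T+1)^M} f(u_t x) dt. Then ∫ |D_T(f)|² dμ ≤ C'·C·T^{−4} for a constant C' depending only on M and η. -/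
set_option maxHeartbeats 1000000


open MeasureTheory
open scoped ENNReal

/-- effective mean ergodic estimate. If the flow `(u_t)` preserves the
probability measure `μ`, `f` is mean-zero in `L²(μ)` with correlation decay
`|⟨u_t f, f⟩| ≤ C(1+|t|)^{-η}`, and `M ≥ 10 + 10/η`, then the ergodic average
`D_T(f)` over `[T^M, (T+1)^M]` satisfies `∫ |D_T(f)|² dμ ≤ C'·C·T^{-4}` with `C'`
depending only on `M` and `η`. -/
theorem stmt14 (η : ℝ) (hη1 : 0 < η) (hη2 : η < 1) (M : ℕ)
    (hM : 10 + 10 / η ≤ (M : ℝ)) :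
    ∃ C' : ℝ, 0 < C' ∧
      ∀ (Ω : Type) (_ : MeasurableSpace Ω) (μ : Measure Ω),
        IsProbabilityMeasure μ →
        ∀ u : ℝ → Ω → Ω, (∀ t, MeasurePreserving (u t) μ μ) →
        (∀ s t, u (s + t) = u s ∘ u t) →
        ∀ f : Ω → ℝ, MemLp f 2 μ →
        (Measurable fun p : ℝ × Ω => f (u p.1 p.2)) →
        (∫ x, f x ∂μ) = 0 →
        ∀ C : ℝ, 0 < C →
        (∀ t : ℝ, |∫ x, f (u t x) * f x ∂μ| ≤ C * (1 + |t|) ^ (-η)) →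
        ∀ T : ℝ, 1 ≤ T →
          (∫ x, ((((T + 1) ^ M - T ^ M)⁻¹ * ∫ t in T ^ M..(T + 1) ^ M, f (u t x)) ^ 2) ∂μ)
            ≤ C' * C * T ^ (-(4 : ℝ)) := by
  refine ⟨3, by norm_num, ?_⟩
  intro Ω mΩ μ hμ u hu hflow f hf hmeas _hmean C hC hcorr T hT
  have hT0 : (0:ℝ) < T := lt_of_lt_of_le one_pos hT
  have hM20 : (20:ℝ) < (M:ℝ) := by
    have h10 : (10:ℝ) < 10 / η := by
      rw [lt_div_iff₀ hη1]; nlinarith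
    linarith
  -- correlation bound at pairs of times
  have hcorr2 : ∀ s t : ℝ, |∫ x, f (u s x) * f (u t x) ∂μ| ≤ C * (1 + |s - t|) ^ (-η) := by
    intro s t
    have h1 : u s = u (s - t) ∘ u t := by rw [← hflow]; norm_num
    have h2 : ∫ x, f (u s x) * f (u t x) ∂μ = ∫ y, f (u (s - t) y) * f y ∂μ := by
      have hg : AEStronglyMeasurable (fun y => f (u (s - t) y) * f y) (Measure.map (u t) μ) := by
        rw [(hu t).map_eq]
        exact ((hmeas.comp measurable_prodMk_left).aestronglyMeasurable).mul hf.1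
      calc ∫ x, f (u s x) * f (u t x) ∂μ
          = ∫ x, f (u (s - t) (u t x)) * f (u t x) ∂μ := by rw [h1]; rfl
        _ = ∫ y, f (u (s - t) y) * f y ∂(Measure.map (u t) μ) :=
            (integral_map (hu t).measurable.aemeasurable hg).symm
        _ = ∫ y, f (u (s - t) y) * f y ∂μ := by rw [(hu t).map_eq]
    rw [h2]; exact hcorr (s - t)
  -- basic positivity
  set A : ℝ := T ^ M with hAdef
  set B : ℝ := (T + 1) ^ M with hBdef
  have hMne : M ≠ 0 := by
    intro h; rw [h] at hM20; norm_num at hM20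
  have hAB : A < B := by
    apply pow_lt_pow_left₀ (by linarith) hT0.le hMne
  set L : ℝ := B - A with hLdef
  have hL0 : (0:ℝ) < L := sub_pos.2 hAB
  -- lower bound on L
  have hLlower : T ^ ((M:ℝ) - 1) ≤ L := by
    have hbern : 1 + (M:ℝ) * (1 / T) ≤ (1 + 1 / T) ^ M := by
      apply one_add_mul_le_pow
      have : 0 < 1 / T := by positivity
      linarith
    have hTA : (0:ℝ) < A := pow_pos hT0 M
    have hfact : (T + 1) ^ M = T ^ M * (1 + 1 / T) ^ M := by
      rw [← mul_pow]; congr 1; field_simp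
    have h3 : A + (M:ℝ) * (T ^ M / T) ≤ B := by
      have := mul_le_mul_of_nonneg_left hbern hTA.le
      rw [← hfact] at this
      calc A + (M:ℝ) * (T ^ M / T) = T ^ M * (1 + (M:ℝ) * (1 / T)) := by ring
        _ ≤ B := this
    have h4 : T ^ ((M:ℝ) - 1) = T ^ M / T := by
      rw [Real.rpow_sub hT0, Real.rpow_one, Real.rpow_natCast]
    have h5 : (1:ℝ) ≤ (M:ℝ) := by linarith
    have h6 : (0:ℝ) < T ^ M / T := by positivity
    rw [h4]; nlinarith
  -- setup measures
  set S : Set ℝ := Set.Ioc A B with hSdef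
  set ν : Measure ℝ := volume.restrict S with hνdef
  have hνuniv : ν Set.univ = ENNReal.ofReal L := by
    rw [hνdef, Measure.restrict_apply_univ, hSdef, Real.volume_Ioc]
  haveI : IsFiniteMeasure ν := ⟨by rw [hνuniv]; exact ENNReal.ofReal_lt_top⟩
  set K : (ℝ × ℝ) × Ω → ℝ := fun q => f (u q.1.1 q.2) * f (u q.1.2 q.2) with hKdef
  have hKmeas : Measurable K :=
    (hmeas.comp ((measurable_fst.comp measurable_fst).prodMk measurable_snd)).mul
      (hmeas.comp ((measurable_snd.comp measurable_fst).prodMk measurable_snd))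
  set E : ℝ≥0∞ := ∫⁻ x, (‖f x‖₊ : ℝ≥0∞) ^ 2 ∂μ with hEdef
  have hE : E < ⊤ := by
    have h2 := lintegral_rpow_enorm_lt_top_of_eLpNorm_lt_top (μ := μ) (f := f)
      two_ne_zero ENNReal.ofNat_ne_top hf.2
    have hconv : ∀ x : ℝ≥0∞, x ^ ((2:ℝ≥0∞).toReal) = x ^ (2:ℕ) := by
      intro x
      rw [ENNReal.toReal_ofNat, ← ENNReal.rpow_natCast]
      norm_num
    rw [hEdef]
    simpa only [hconv, enorm_eq_nnnorm] using h2
  have hpull : ∀ c : ℝ, ∫⁻ x, (‖f (u c x)‖₊ : ℝ≥0∞) ^ 2 ∂μ = E := by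
    intro c
    have hgm : AEMeasurable (fun y => (‖f y‖₊ : ℝ≥0∞) ^ 2) (Measure.map (u c) μ) := by
      rw [(hu c).map_eq]
      exact hf.1.aemeasurable.enorm.pow_const 2
    calc ∫⁻ x, (‖f (u c x)‖₊ : ℝ≥0∞) ^ 2 ∂μ
        = ∫⁻ y, (‖f y‖₊ : ℝ≥0∞) ^ 2 ∂(Measure.map (u c) μ) :=
          (lintegral_map' hgm (hu c).measurable.aemeasurable).symm
      _ = E := by rw [(hu c).map_eq]
  -- integrability of K on the product
  have hKint : Integrable K ((ν.prod ν).prod μ) := by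
    refine ⟨hKmeas.aestronglyMeasurable, ?_⟩
    have hinner : ∀ p : ℝ × ℝ, ∫⁻ x, (‖K (p, x)‖₊ : ℝ≥0∞) ∂μ ≤ 2 * E := by
      intro p
      have hb : ∀ x : Ω, (‖K (p, x)‖₊ : ℝ≥0∞)
          ≤ (‖f (u p.1 x)‖₊ : ℝ≥0∞) ^ 2 + (‖f (u p.2 x)‖₊ : ℝ≥0∞) ^ 2 := by
        intro x
        have he : (‖K (p, x)‖₊ : ℝ≥0∞)
            = (‖f (u p.1 x)‖₊ : ℝ≥0∞) * (‖f (u p.2 x)‖₊ : ℝ≥0∞) := by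
          rw [hKdef]
          push_cast [nnnorm_mul]
          rfl
        rw [he]
        rcases le_total ((‖f (u p.1 x)‖₊ : ℝ≥0∞)) ((‖f (u p.2 x)‖₊ : ℝ≥0∞)) with hle | hle
        · calc (‖f (u p.1 x)‖₊ : ℝ≥0∞) * (‖f (u p.2 x)‖₊ : ℝ≥0∞)
              ≤ (‖f (u p.2 x)‖₊ : ℝ≥0∞) * (‖f (u p.2 x)‖₊ : ℝ≥0∞) := mul_le_mul_left hle _
            _ = (‖f (u p.2 x)‖₊ : ℝ≥0∞) ^ 2 := (sq _).symm
            _ ≤ _ := le_add_self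
        · calc (‖f (u p.1 x)‖₊ : ℝ≥0∞) * (‖f (u p.2 x)‖₊ : ℝ≥0∞)
              ≤ (‖f (u p.1 x)‖₊ : ℝ≥0∞) * (‖f (u p.1 x)‖₊ : ℝ≥0∞) := mul_le_mul_right hle _
            _ = (‖f (u p.1 x)‖₊ : ℝ≥0∞) ^ 2 := (sq _).symm
            _ ≤ _ := self_le_add_right _ _
      calc ∫⁻ x, (‖K (p, x)‖₊ : ℝ≥0∞) ∂μ
          ≤ ∫⁻ x, ((‖f (u p.1 x)‖₊ : ℝ≥0∞) ^ 2 + (‖f (u p.2 x)‖₊ : ℝ≥0∞) ^ 2) ∂μ :=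
            lintegral_mono hb
        _ = (∫⁻ x, (‖f (u p.1 x)‖₊ : ℝ≥0∞) ^ 2 ∂μ) + ∫⁻ x, (‖f (u p.2 x)‖₊ : ℝ≥0∞) ^ 2 ∂μ :=
            lintegral_add_left ((hmeas.comp measurable_prodMk_left).enorm.pow_const 2) _
        _ = 2 * E := by rw [hpull p.1, hpull p.2, two_mul]
    have hiter : ∫⁻ q, (‖K q‖₊ : ℝ≥0∞) ∂((ν.prod ν).prod μ)
        = ∫⁻ p, ∫⁻ x, (‖K (p, x)‖₊ : ℝ≥0∞) ∂μ ∂(ν.prod ν) :=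
      lintegral_prod _ hKmeas.enorm.aemeasurable
    show ∫⁻ q, (‖K q‖₊ : ℝ≥0∞) ∂((ν.prod ν).prod μ) < ⊤
    rw [hiter]
    calc ∫⁻ p, ∫⁻ x, (‖K (p, x)‖₊ : ℝ≥0∞) ∂μ ∂(ν.prod ν)
        ≤ ∫⁻ _, 2 * E ∂(ν.prod ν) := lintegral_mono hinner
      _ = 2 * E * (ν.prod ν) Set.univ := lintegral_const _
      _ < ⊤ := by
          apply ENNReal.mul_lt_top
          · exact ENNReal.mul_lt_top (by norm_num) hE
          · rw [← Set.univ_prod_univ, Measure.prod_prod, hνuniv]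
            exact ENNReal.mul_lt_top ENNReal.ofReal_lt_top ENNReal.ofReal_lt_top
  -- rewrite the ergodic average via the double integral
  set h : ℝ × ℝ → ℝ := fun p => ∫ x, K (p, x) ∂μ with hhdef
  have hstep1 : ∫ x, ((L⁻¹ * ∫ t in A..B, f (u t x)) ^ 2) ∂μ
      = L⁻¹ ^ 2 * ∫ p, h p ∂(ν.prod ν) := by
    have hIeq : ∀ x : Ω, ((L⁻¹ * ∫ t in A..B, f (u t x)) ^ 2)
        = L⁻¹ ^ 2 * ∫ p, K (p, x) ∂(ν.prod ν) := by
      intro x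
      rw [mul_pow]
      congr 1
      rw [intervalIntegral.integral_of_le hAB.le, sq]
      exact (integral_prod_mul (μ := ν) (ν := ν) (fun t => f (u t x)) (fun t => f (u t x))).symm
    have e1 : ∫ x, ((L⁻¹ * ∫ t in A..B, f (u t x)) ^ 2) ∂μ
        = ∫ x, L⁻¹ ^ 2 * (∫ p, K (p, x) ∂(ν.prod ν)) ∂μ := by
      congr 1
      funext x
      exact hIeq x
    rw [e1, integral_const_mul]
    congr 1
    exact (integral_integral_swap hKint).symm
  -- the diagonal width and the decay scale
  set r : ℝ := T ^ ((M:ℝ)/2) with hrdef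
  have hr0 : (0:ℝ) < r := Real.rpow_pos_of_pos hT0 _
  set θ : ℝ := r ^ (-η) with hθdef
  have hθ0 : (0:ℝ) ≤ θ := Real.rpow_nonneg hr0.le _
  -- pointwise bound on the correlation kernel
  have hpt : ∀ s t : ℝ, |h (s, t)|
      ≤ C * Set.indicator (Set.Icc (s - r) (s + r)) (fun _ => (1:ℝ)) t + C * θ := by
    intro s t
    have hbase : |h (s, t)| ≤ C * (1 + |s - t|) ^ (-η) := hcorr2 s t
    by_cases hst : |s - t| ≤ r
    · have htmem : t ∈ Set.Icc (s - r) (s + r) := by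
        rcases abs_le.1 hst with ⟨h1, h2⟩
        constructor <;> [linarith; linarith]
      rw [Set.indicator_of_mem htmem]
      have hle1 : (1 + |s - t|) ^ (-η) ≤ 1 := by
        apply Real.rpow_le_one_of_one_le_of_nonpos
        · have := abs_nonneg (s - t); linarith
        · linarith
      have : C * (1 + |s - t|) ^ (-η) ≤ C * 1 := by
        apply mul_le_mul_of_nonneg_left hle1 hC.le
      nlinarith
    · push_neg at hst
      have hge : r ≤ 1 + |s - t| := by
        have := abs_nonneg (s - t); linarith
      have hdec : (1 + |s - t|) ^ (-η) ≤ θ := by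
        rw [hθdef, Real.rpow_neg hr0.le, Real.rpow_neg (by positivity)]
        apply inv_anti₀ (Real.rpow_pos_of_pos hr0 _)
        exact Real.rpow_le_rpow hr0.le hge hη1.le
      have hind : (0:ℝ) ≤ Set.indicator (Set.Icc (s - r) (s + r)) (fun _ => (1:ℝ)) t := by
        apply Set.indicator_nonneg
        intro _ _
        norm_num
      have : C * (1 + |s - t|) ^ (-η) ≤ C * θ := mul_le_mul_of_nonneg_left hdec hC.le
      nlinarith
  -- integrate the bound
  have hhint : Integrable h (ν.prod ν) := hKint.integral_prod_left
  have hinner : ∀ s : ℝ, ∫ t, |h (s, t)| ∂ν ≤ C * (2 * r) + C * θ * L := by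
    intro s
    have hindint : Integrable (fun t => C * Set.indicator (Set.Icc (s - r) (s + r))
        (fun _ => (1:ℝ)) t + C * θ) ν := by
      apply Integrable.add
      · exact ((integrable_const (1:ℝ)).indicator measurableSet_Icc).const_mul C
      · exact integrable_const _
    have hmono := integral_mono_of_nonneg (μ := ν)
      (f := fun t => |h (s, t)|)
      (g := fun t => C * Set.indicator (Set.Icc (s - r) (s + r)) (fun _ => (1:ℝ)) t + C * θ)
      (Filter.Eventually.of_forall fun t => abs_nonneg _) hindint
      (Filter.Eventually.of_forall fun t => hpt s t)
    refine hmono.trans ?_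
    have hcomp : ∫ t, (C * Set.indicator (Set.Icc (s - r) (s + r)) (fun _ => (1:ℝ)) t
          + C * θ) ∂ν
        = C * (ν (Set.Icc (s - r) (s + r))).toReal + (ν Set.univ).toReal * (C * θ) := by
      rw [integral_add (((integrable_const (1:ℝ)).indicator measurableSet_Icc).const_mul C)
        (integrable_const _), integral_const_mul, integral_indicator_const _ measurableSet_Icc,
        integral_const]
      simp [smul_eq_mul]
      rfl
    rw [hcomp]
    have hm1 : (ν (Set.Icc (s - r) (s + r))).toReal ≤ 2 * r := by
      have h1 : ν (Set.Icc (s - r) (s + r)) ≤ ENNReal.ofReal (2 * r) := by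
        rw [hνdef, Measure.restrict_apply measurableSet_Icc]
        refine (measure_mono Set.inter_subset_left).trans ?_
        rw [Real.volume_Icc]
        apply ENNReal.ofReal_le_ofReal
        linarith
      calc (ν (Set.Icc (s - r) (s + r))).toReal
          ≤ (ENNReal.ofReal (2 * r)).toReal := ENNReal.toReal_mono ENNReal.ofReal_ne_top h1
        _ = 2 * r := ENNReal.toReal_ofReal (by linarith)
    have hm2 : (ν Set.univ).toReal = L := by
      rw [hνuniv, ENNReal.toReal_ofReal hL0.le]
    rw [hm2]
    nlinarith
  have habs : |∫ p, h p ∂(ν.prod ν)| ≤ (C * (2 * r) + C * θ * L) * L := by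
    have h1 : |∫ p, h p ∂(ν.prod ν)| ≤ ∫ p, |h p| ∂(ν.prod ν) :=
      by simpa [Real.norm_eq_abs] using norm_integral_le_integral_norm (μ := ν.prod ν) h
    have h2 : ∫ p, |h p| ∂(ν.prod ν) = ∫ s, ∫ t, |h (s, t)| ∂ν ∂ν :=
      integral_prod _ hhint.abs
    have h3 : ∫ s, ∫ t, |h (s, t)| ∂ν ∂ν ≤ ∫ _, (C * (2 * r) + C * θ * L) ∂ν := by
      apply integral_mono_of_nonneg
      · exact Filter.Eventually.of_forall fun s => integral_nonneg fun t => abs_nonneg _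
      · exact integrable_const _
      · exact Filter.Eventually.of_forall hinner
    have h4 : ∫ _, (C * (2 * r) + C * θ * L) ∂ν = (C * (2 * r) + C * θ * L) * L := by
      rw [integral_const, measureReal_def, hνuniv, ENNReal.toReal_ofReal hL0.le, smul_eq_mul, mul_comm]
    calc |∫ p, h p ∂(ν.prod ν)| ≤ ∫ p, |h p| ∂(ν.prod ν) := h1
      _ = ∫ s, ∫ t, |h (s, t)| ∂ν ∂ν := h2
      _ ≤ ∫ _, (C * (2 * r) + C * θ * L) ∂ν := h3
      _ = (C * (2 * r) + C * θ * L) * L := h4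
  -- final numeric estimates
  clear_value A B L S ν K E h r θ
  have hrL : r / L ≤ T ^ (-(4:ℝ)) := by
    have h1 : r / L ≤ r / T ^ ((M:ℝ) - 1) := by
      gcongr
    have h2 : r / T ^ ((M:ℝ) - 1) = T ^ ((M:ℝ)/2 - ((M:ℝ) - 1)) := by
      rw [hrdef, ← Real.rpow_sub hT0]
    have h3 : T ^ ((M:ℝ)/2 - ((M:ℝ) - 1)) ≤ T ^ (-(4:ℝ)) :=
      Real.rpow_le_rpow_of_exponent_le hT (by linarith)
    calc r / L ≤ r / T ^ ((M:ℝ) - 1) := h1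
      _ = T ^ ((M:ℝ)/2 - ((M:ℝ) - 1)) := h2
      _ ≤ T ^ (-(4:ℝ)) := h3
  have hθ4 : θ ≤ T ^ (-(4:ℝ)) := by
    have h1 : θ = T ^ ((M:ℝ)/2 * (-η)) := by
      rw [hθdef, hrdef, ← Real.rpow_mul hT0.le]
    have hηM : 10 ≤ η * (M:ℝ) := by
      have he : η * (10 + 10 / η) = 10 * η + 10 := by
        field_simp
      have h' : 10 * η + 10 ≤ η * (M:ℝ) := by
        rw [← he]
        exact mul_le_mul_of_nonneg_left hM hη1.le
      linarith
    have h2 : (M:ℝ)/2 * (-η) ≤ -(4:ℝ) := by nlinarith [hηM]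
    rw [h1]
    exact Real.rpow_le_rpow_of_exponent_le hT h2
  have hT4 : (0:ℝ) < T ^ (-(4:ℝ)) := Real.rpow_pos_of_pos hT0 _
  calc ∫ x, ((L⁻¹ * ∫ t in A..B, f (u t x)) ^ 2) ∂μ
      = L⁻¹ ^ 2 * ∫ p, h p ∂(ν.prod ν) := hstep1
    _ ≤ L⁻¹ ^ 2 * |∫ p, h p ∂(ν.prod ν)| :=
        mul_le_mul_of_nonneg_left (le_abs_self _) (by positivity)
    _ ≤ L⁻¹ ^ 2 * ((C * (2 * r) + C * θ * L) * L) :=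
        mul_le_mul_of_nonneg_left habs (by positivity)
    _ = 2 * C * (r / L) + C * θ := by
        field_simp
    _ ≤ 3 * C * T ^ (-(4:ℝ)) := by
        nlinarith [mul_le_mul_of_nonneg_left hrL hC.le, mul_le_mul_of_nonneg_left hθ4 hC.le]
end
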